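/- Under the stated hypotheses, if M ⊆ X′ is a closed linear subspace with M ≠ {0} which is invariant under the adjoint S′ (i.e., S′(M) ⊆ M), then σ(S) ⊆ σ(S′|_M) ⊆ η(σ(S)), where S′|_M is the restriction of S′ to M and η(K) denotes the full spectrum of K, i.e., the union of K with all bounded connected components of ℂ∖K. -/

import Mathlib

set_option maxHeartbeats 1000000
set_option synthInstance.maxHeartbeats 400000

/-- The adjoint of `S` acting on the continuous dual: `(dualOp S φ) x = φ (S x)`. -/
noncomputable def dualOp {X : Type*} [NormedAddCommGroup X] [NormedSpace ℂ X]
    (S : X →L[ℂ] X) : (X →L[ℂ] ℂ) →L[ℂ] (X →L[ℂ] ℂ) :=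
  (ContinuousLinearMap.compL ℂ X X ℂ).flip S

/-- Restriction of an operator to an invariant subspace. -/
noncomputable def restrictOp {X : Type*} [NormedAddCommGroup X] [NormedSpace ℂ X]
    (T : X →L[ℂ] X) (M : Submodule ℂ X) (h : ∀ y ∈ M, T y ∈ M) : M →L[ℂ] M where
  toLinearMap := T.toLinearMap.restrict h
  cont := Continuous.subtype_mk (T.continuous.comp continuous_subtype_val) _

/-- The full spectrum `η(K)`: the union of `K` with all bounded connected components
of `ℂ ∖ K`. -/
def fullSpectrum (K : Set ℂ) : Set ℂ :=
  K ∪ {z | z ∉ K ∧ Bornology.IsBounded (connectedComponentIn Kᶜ z)}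

open ContinuousLinearMap Set Filter Topology

lemma restrictOp_coe {X : Type*} [NormedAddCommGroup X] [NormedSpace ℂ X]
    (T : X →L[ℂ] X) (M : Submodule ℂ X) (h : ∀ y ∈ M, T y ∈ M) (x : M) :
    ((restrictOp T M h x : X)) = T (x : X) := rfl

lemma dualOp_apply {X : Type*} [NormedAddCommGroup X] [NormedSpace ℂ X]
    (S : X →L[ℂ] X) (φ : X →L[ℂ] ℂ) (x : X) : dualOp S φ x = φ (S x) := rfl

lemma dualOp_mul {X : Type*} [NormedAddCommGroup X] [NormedSpace ℂ X]
    (A B : X →L[ℂ] X) : dualOp (A * B) = dualOp B * dualOp A := by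
  ext φ x; rfl

lemma dualOp_one {X : Type*} [NormedAddCommGroup X] [NormedSpace ℂ X] :
    dualOp (1 : X →L[ℂ] X) = 1 := by
  ext φ x; rfl

lemma dualOp_algebraMap_sub {X : Type*} [NormedAddCommGroup X] [NormedSpace ℂ X]
    (S : X →L[ℂ] X) (z : ℂ) :
    dualOp (algebraMap ℂ (X →L[ℂ] X) z - S)
      = @algebraMap ℂ ((X →L[ℂ] ℂ) →L[ℂ] (X →L[ℂ] ℂ)) _ ContinuousLinearMap.semiring _ z
        - dualOp S := by
  have h1 : algebraMap ℂ (X →L[ℂ] X) z = z • 1 := Algebra.algebraMap_eq_smul_one z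
  have h2 : @algebraMap ℂ ((X →L[ℂ] ℂ) →L[ℂ] (X →L[ℂ] ℂ)) _ ContinuousLinearMap.semiring _ z
      = z • 1 :=
    Algebra.algebraMap_eq_smul_one z
  rw [h1, h2]
  ext φ x
  show φ ((z • (1 : X →L[ℂ] X) - S) x) = (z • φ - dualOp S φ) x
  simp [dualOp_apply, smul_eq_mul]

lemma spectrum_dualOp_subset {X : Type*} [NormedAddCommGroup X] [NormedSpace ℂ X]
    (S : X →L[ℂ] X) : spectrum ℂ (dualOp S) ⊆ spectrum ℂ S := by
  intro z hz
  by_contra h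
  rw [spectrum.notMem_iff] at h
  obtain ⟨u, hu⟩ := h
  apply spectrum.notMem_iff.mpr _ hz
  refine ⟨⟨dualOp ((u : X →L[ℂ] X)), dualOp ((↑u⁻¹ : X →L[ℂ] X)), ?_, ?_⟩, ?_⟩
  · rw [← dualOp_mul, u.inv_mul, dualOp_one]
  · rw [← dualOp_mul, u.mul_inv, dualOp_one]
  · show dualOp (u : X →L[ℂ] X) = _
    rw [hu, dualOp_algebraMap_sub]

/-- Key lemma: if `μ` lies in an unbounded connected component of `Kᶜ` where
`K ⊇ σ(T)` and `Kᶜ` is open, then `μ` is not in the spectrum of the restriction of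
`T` to a closed invariant subspace. -/
lemma resolvent_restrict_lemma {E : Type*} [NormedAddCommGroup E] [NormedSpace ℂ E]
    [CompleteSpace E] (T : E →L[ℂ] E) (M : Submodule ℂ E) (hM : IsClosed (M : Set E))
    (hinv : ∀ y ∈ M, T y ∈ M) {K : Set ℂ} (hKopen : IsOpen Kᶜ) (hK : spectrum ℂ T ⊆ K)
    {μ : ℂ} (hμK : μ ∉ K) (hub : ¬ Bornology.IsBounded (connectedComponentIn Kᶜ μ)) :
    μ ∉ spectrum ℂ (restrictOp T M hinv) := by
  classical
  set P : Set (E →L[ℂ] E) := {B | ∀ y ∈ M, B y ∈ M} with hPdef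
  have hPone : (1 : E →L[ℂ] E) ∈ P := fun y hy => hy
  have hPT : T ∈ P := hinv
  have hPmul : ∀ B C : E →L[ℂ] E, B ∈ P → C ∈ P → B * C ∈ P :=
    fun B C hB hC y hy => hB _ (hC y hy)
  have hPsmul : ∀ (c : ℂ) (B : E →L[ℂ] E), B ∈ P → c • B ∈ P :=
    fun c B hB y hy => M.smul_mem c (hB y hy)
  have hPclosed : IsClosed P := by
    have hrw : P = ⋂ y ∈ (M : Set E), ((fun B : E →L[ℂ] E => B y) ⁻¹' (M : Set E)) := by
      ext B; simp [hPdef]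
    rw [hrw]
    exact isClosed_biInter fun y _ =>
      hM.preimage (ContinuousLinearMap.apply ℂ E y).continuous
  -- geometric series stays in P
  have geom : ∀ (t : E →L[ℂ] E), t ∈ P → ∀ (h : ‖t‖ < 1),
      (↑(Units.oneSub t h)⁻¹ : E →L[ℂ] E) ∈ P := by
    intro t ht h
    have hsum : Summable fun n => t ^ n := summable_geometric_of_norm_lt_one h
    have hval : (↑(Units.oneSub t h)⁻¹ : E →L[ℂ] E) = ∑' n, t ^ n := rfl
    rw [hval]
    have hpow : ∀ n, t ^ n ∈ P := by
      intro n; induction n with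
      | zero => simpa using hPone
      | succ n ih => rw [pow_succ]; exact hPmul _ _ ih ht
    refine hPclosed.mem_of_tendsto hsum.hasSum.tendsto_sum_nat
      (Filter.Eventually.of_forall fun n => ?_)
    intro y hy
    rw [ContinuousLinearMap.sum_apply]
    exact Submodule.sum_mem M fun i _ => hpow i y hy
  set res : ℂ → E →L[ℂ] E := fun z => Ring.inverse (algebraMap ℂ (E →L[ℂ] E) z - T)
    with hres
  set V : Set ℂ := {z | IsUnit (algebraMap ℂ (E →L[ℂ] E) z - T) ∧ res z ∈ P} with hVdef
  set W : Set ℂ := {z | IsUnit (algebraMap ℂ (E →L[ℂ] E) z - T) ∧ res z ∉ P} with hWdef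
  have hacont : Continuous fun z : ℂ => algebraMap ℂ (E →L[ℂ] E) z - T := by
    have h : (fun z : ℂ => algebraMap ℂ (E →L[ℂ] E) z - T)
        = fun z : ℂ => z • (1 : E →L[ℂ] E) - T := by
      funext z; rw [Algebra.algebraMap_eq_smul_one]
    rw [h]
    exact (continuous_id.smul continuous_const).sub continuous_const
  have hVopen : IsOpen V := by
    rw [Metric.isOpen_iff]
    rintro z₀ ⟨⟨u, hu⟩, hp⟩
    have hR : res z₀ = (↑u⁻¹ : E →L[ℂ] E) := by
      show Ring.inverse (algebraMap ℂ (E →L[ℂ] E) z₀ - T) = _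
      rw [← hu, Ring.inverse_unit]
    have hp' : (↑u⁻¹ : E →L[ℂ] E) ∈ P := hR ▸ hp
    refine ⟨(‖(↑u⁻¹ : E →L[ℂ] E)‖ + 1)⁻¹, by positivity, ?_⟩
    intro z hz
    rw [Metric.mem_ball, Complex.dist_eq] at hz
    have hz' : ‖z₀ - z‖ < (‖(↑u⁻¹ : E →L[ℂ] E)‖ + 1)⁻¹ := by
      rw [norm_sub_rev]
      exact hz
    have hsn : ‖(z₀ - z) • (↑u⁻¹ : E →L[ℂ] E)‖ < 1 := by
      rw [norm_smul (z₀ - z) (↑u⁻¹ : E →L[ℂ] E)]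
      have hpos : (0:ℝ) < ‖(↑u⁻¹ : E →L[ℂ] E)‖ + 1 := by positivity
      calc ‖z₀ - z‖ * ‖(↑u⁻¹ : E →L[ℂ] E)‖
          ≤ ‖z₀ - z‖ * (‖(↑u⁻¹ : E →L[ℂ] E)‖ + 1) := by
            nlinarith [norm_nonneg (z₀ - z), norm_nonneg (↑u⁻¹ : E →L[ℂ] E)]
        _ < (‖(↑u⁻¹ : E →L[ℂ] E)‖ + 1)⁻¹ * (‖(↑u⁻¹ : E →L[ℂ] E)‖ + 1) :=
            mul_lt_mul_of_pos_right hz' hpos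
        _ = 1 := inv_mul_cancel₀ (ne_of_gt hpos)
    set s : E →L[ℂ] E := (z₀ - z) • (↑u⁻¹ : E →L[ℂ] E) with hs
    have hfact : algebraMap ℂ (E →L[ℂ] E) z - T
        = ((u * Units.oneSub s hsn : (E →L[ℂ] E)ˣ) : E →L[ℂ] E) := by
      have h1 : ((u * Units.oneSub s hsn : (E →L[ℂ] E)ˣ) : E →L[ℂ] E)
          = (u : E →L[ℂ] E) * (1 - s) := rfl
      rw [h1, mul_sub, mul_one, hs, mul_smul_comm, u.mul_inv, hu]
      rw [Algebra.algebraMap_eq_smul_one (A := E →L[ℂ] E) z,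
        Algebra.algebraMap_eq_smul_one (A := E →L[ℂ] E) z₀, sub_smul]
      abel
    have hresz : res z = (↑(Units.oneSub s hsn)⁻¹ : E →L[ℂ] E) * (↑u⁻¹ : E →L[ℂ] E) := by
      show Ring.inverse (algebraMap ℂ (E →L[ℂ] E) z - T) = _
      rw [hfact, Ring.inverse_unit, mul_inv_rev, Units.val_mul]
    refine ⟨?_, ?_⟩
    · rw [hfact]; exact (u * Units.oneSub s hsn).isUnit
    · rw [hresz]
      exact hPmul _ _ (geom s (hPsmul _ _ hp') hsn) hp'
  have hWopen : IsOpen W := by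
    rw [isOpen_iff_mem_nhds]
    rintro z₀ ⟨⟨u, hu⟩, hp⟩
    have hCA : ContinuousAt res z₀ := by
      have hcomp : res = Ring.inverse ∘ (fun z : ℂ => algebraMap ℂ (E →L[ℂ] E) z - T) := rfl
      rw [hcomp]
      refine ContinuousAt.comp ?_ hacont.continuousAt
      show ContinuousAt Ring.inverse (algebraMap ℂ (E →L[ℂ] E) z₀ - T)
      rw [← hu]
      exact NormedRing.inverse_continuousAt u
    have h1 : ∀ᶠ z in 𝓝 z₀, IsUnit (algebraMap ℂ (E →L[ℂ] E) z - T) := by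
      have hmem : {B : E →L[ℂ] E | IsUnit B} ∈ 𝓝 (algebraMap ℂ (E →L[ℂ] E) z₀ - T) :=
        Units.isOpen.mem_nhds ⟨u, hu⟩
      exact hacont.continuousAt hmem
    have h2 : ∀ᶠ z in 𝓝 z₀, res z ∉ P := hCA (hPclosed.isOpen_compl.mem_nhds hp)
    filter_upwards [h1, h2] with z ha hb using ⟨ha, hb⟩
  set U := connectedComponentIn Kᶜ μ with hU
  have hUconn : IsPreconnected U := isPreconnected_connectedComponentIn
  have hUsub : U ⊆ Kᶜ := connectedComponentIn_subset _ _
  have hUVW : U ⊆ V ∪ W := by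
    intro z hz
    have hz1 : IsUnit (algebraMap ℂ (E →L[ℂ] E) z - T) :=
      spectrum.notMem_iff.mp (fun hmem => hUsub hz (hK hmem))
    by_cases hzp : res z ∈ P
    · exact Or.inl ⟨hz1, hzp⟩
    · exact Or.inr ⟨hz1, hzp⟩
  have hdisj : Disjoint V W := by
    rw [Set.disjoint_left]; rintro z ⟨_, h1⟩ ⟨_, h2⟩; exact h2 h1
  have hex : ∃ z ∈ U, ‖T‖ < ‖z‖ := by
    by_contra h; push_neg at h
    exact hub (isBounded_iff_forall_norm_le.mpr ⟨‖T‖, h⟩)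
  obtain ⟨z, hzU, hzn⟩ := hex
  have hznpos : (0:ℝ) < ‖z‖ := lt_of_le_of_lt (norm_nonneg T) hzn
  have hz0 : z ≠ 0 := by
    intro h; rw [h, norm_zero] at hznpos; exact lt_irrefl _ hznpos
  have ht : ‖z⁻¹ • T‖ < 1 := by
    rw [norm_smul (z⁻¹) T, norm_inv]
    calc ‖z‖⁻¹ * ‖T‖ < ‖z‖⁻¹ * ‖z‖ :=
          mul_lt_mul_of_pos_left hzn (inv_pos.mpr hznpos)
      _ = 1 := inv_mul_cancel₀ (ne_of_gt hznpos)
  have hfact : algebraMap ℂ (E →L[ℂ] E) z - T = z • ((1 : E →L[ℂ] E) - z⁻¹ • T) := by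
    rw [smul_sub, smul_smul, mul_inv_cancel₀ hz0, one_smul,
      Algebra.algebraMap_eq_smul_one]
  set w : (E →L[ℂ] E)ˣ := Units.oneSub (z⁻¹ • T) ht with hw
  have hmul1 : (z • ((1 : E →L[ℂ] E) - z⁻¹ • T)) * (z⁻¹ • (↑w⁻¹ : E →L[ℂ] E)) = 1 := by
    rw [smul_mul_assoc, mul_smul_comm, smul_smul, mul_inv_cancel₀ hz0, one_smul]
    exact w.mul_inv
  have hmul2 : (z⁻¹ • (↑w⁻¹ : E →L[ℂ] E)) * (z • ((1 : E →L[ℂ] E) - z⁻¹ • T)) = 1 := by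
    rw [smul_mul_assoc, mul_smul_comm, smul_smul, inv_mul_cancel₀ hz0, one_smul]
    exact w.inv_mul
  have hzV : z ∈ V := by
    refine ⟨?_, ?_⟩
    · rw [hfact]
      exact ⟨⟨z • ((1 : E →L[ℂ] E) - z⁻¹ • T), z⁻¹ • (↑w⁻¹ : E →L[ℂ] E), hmul1, hmul2⟩, rfl⟩
    · have hresz : res z = z⁻¹ • (↑w⁻¹ : E →L[ℂ] E) := by
        show Ring.inverse (algebraMap ℂ (E →L[ℂ] E) z - T) = _
        rw [hfact]
        exact Ring.inverse_unit
          ⟨z • ((1 : E →L[ℂ] E) - z⁻¹ • T), z⁻¹ • (↑w⁻¹ : E →L[ℂ] E), hmul1, hmul2⟩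
      rw [hresz]
      exact hPsmul _ _ (geom _ (hPsmul _ _ hPT) ht)
  have hUV : U ⊆ V :=
    IsPreconnected.subset_left_of_subset_union hVopen hWopen hdisj hUVW ⟨z, hzU, hzV⟩ hUconn
  have hμU : μ ∈ U := mem_connectedComponentIn hμK
  obtain ⟨hμ1, hμ2⟩ := hUV hμU
  obtain ⟨u, hu⟩ := hμ1
  have hRres : res μ = (↑u⁻¹ : E →L[ℂ] E) := by
    show Ring.inverse (algebraMap ℂ (E →L[ℂ] E) μ - T) = _
    rw [← hu, Ring.inverse_unit]
  rw [hRres] at hμ2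
  rw [spectrum.notMem_iff]
  have hval : ∀ (x : M), (((algebraMap ℂ (M →L[ℂ] M) μ - restrictOp T M hinv)) x : E)
      = algebraMap ℂ (E →L[ℂ] E) μ (x : E) - T (x : E) := by
    intro x
    rw [Algebra.algebraMap_eq_smul_one (A := M →L[ℂ] M) μ,
      Algebra.algebraMap_eq_smul_one (A := E →L[ℂ] E) μ]
    simp [restrictOp_coe]
  have hmu1 : (algebraMap ℂ (E →L[ℂ] E) μ - T) * (↑u⁻¹ : E →L[ℂ] E) = 1 := by
    rw [← hu]; exact u.mul_inv
  have hmu2 : (↑u⁻¹ : E →L[ℂ] E) * (algebraMap ℂ (E →L[ℂ] E) μ - T) = 1 := by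
    rw [← hu]; exact u.inv_mul
  refine ⟨⟨algebraMap ℂ (M →L[ℂ] M) μ - restrictOp T M hinv,
      restrictOp (↑u⁻¹ : E →L[ℂ] E) M hμ2, ?_, ?_⟩, rfl⟩
  · refine ContinuousLinearMap.ext fun x => Subtype.ext ?_
    have h1 : (((algebraMap ℂ (M →L[ℂ] M) μ - restrictOp T M hinv) *
        restrictOp (↑u⁻¹ : E →L[ℂ] E) M hμ2) x : E)
        = algebraMap ℂ (E →L[ℂ] E) μ ((↑u⁻¹ : E →L[ℂ] E) (x:E))
          - T ((↑u⁻¹ : E →L[ℂ] E) (x:E)) := by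
      rw [ContinuousLinearMap.mul_apply, hval, restrictOp_coe]
    have hpt := congrArg (fun B : E →L[ℂ] E => B (x : E)) hmu1
    simp only [ContinuousLinearMap.mul_apply, ContinuousLinearMap.sub_apply,
      ContinuousLinearMap.one_apply] at hpt
    rw [h1]
    exact hpt
  · refine ContinuousLinearMap.ext fun x => Subtype.ext ?_
    have h1 : ((restrictOp (↑u⁻¹ : E →L[ℂ] E) M hμ2 *
        (algebraMap ℂ (M →L[ℂ] M) μ - restrictOp T M hinv)) x : E)
        = (↑u⁻¹ : E →L[ℂ] E) (algebraMap ℂ (E →L[ℂ] E) μ (x:E) - T (x:E)) := by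
      rw [ContinuousLinearMap.mul_apply, restrictOp_coe, hval]
    have hpt := congrArg (fun B : E →L[ℂ] E => B (x : E)) hmu2
    simp only [ContinuousLinearMap.mul_apply, ContinuousLinearMap.sub_apply,
      ContinuousLinearMap.one_apply] at hpt
    rw [h1]
    exact hpt

/-- Abstract form of the first inclusion. -/
lemma part1_abstract {X Y : Type*} [NormedAddCommGroup X] [NormedSpace ℂ X] [CompleteSpace X]
    [NormedAddCommGroup Y] [NormedSpace ℂ Y] [CompleteSpace Y]
    (S : X →L[ℂ] X) (G : Set ℂ) (hG : IsOpen G) (hGconn : IsConnected G)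
    (Φ : ℂ → ℂ) (hΦ : DifferentiableOn ℂ Φ G)
    (f : ℂ → X) (hf : DifferentiableOn ℂ f G)
    (heig : ∀ w ∈ G, S (f w) = Φ w • f w)
    (hdense : Dense (Submodule.span ℂ (f '' G) : Set X))
    (hspec : spectrum ℂ S ⊆ closure (Φ '' G))
    (A : Y →L[ℂ] Y) (ι : Y →L[ℂ] (X →L[ℂ] ℂ))
    (hcompat : ∀ y : Y, ι (A y) = dualOp S (ι y))
    (hinj : Function.Injective ⇑ι) (hne : ∃ y : Y, y ≠ 0) :
    spectrum ℂ S ⊆ spectrum ℂ A := by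
  obtain ⟨y₀, hy₀⟩ := hne
  set φ : X →L[ℂ] ℂ := ι y₀ with hφdef
  have hφ0 : φ ≠ 0 := fun h => hy₀ (hinj (h.trans (map_zero ι).symm))
  set g : ℂ → ℂ := fun w => φ (f w) with hg
  have hgdiff : DifferentiableOn ℂ g G := φ.differentiable.comp_differentiableOn hf
  have hgne : ¬ (Set.EqOn g 0 G) := by
    intro h
    apply hφ0
    have hspan : Set.EqOn (⇑φ) 0 (Submodule.span ℂ (f '' G) : Set X) := by
      intro x hx
      induction hx using Submodule.span_induction with
      | mem x hx =>
          obtain ⟨w, hw, rfl⟩ := hx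
          exact h hw
      | zero => simp
      | add x y _ _ hx hy => simp [map_add, hx, hy]
      | smul c x _ hx => simp [map_smul, hx]
    have hphi := Continuous.ext_on hdense φ.continuous continuous_const hspan
    ext x
    rw [ContinuousLinearMap.zero_apply]
    exact (congrFun hphi x).trans rfl
  have hkey : ∀ w ∈ G, g w ≠ 0 → Φ w ∈ spectrum ℂ A := by
    intro w hw hgw
    by_contra hns
    rw [spectrum.notMem_iff] at hns
    obtain ⟨u, hu⟩ := hns
    have h2 := congrArg (fun B : Y →L[ℂ] Y => ι (B y₀)) u.mul_inv
    simp only [ContinuousLinearMap.mul_apply, ContinuousLinearMap.one_apply] at h2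
    rw [hu, Algebra.algebraMap_eq_smul_one] at h2
    set χ : Y := (↑u⁻¹ : Y →L[ℂ] Y) y₀ with hχ
    have h4 : ι ((Φ w • (1 : Y →L[ℂ] Y) - A) χ) (f w) = 0 := by
      have h5 : (Φ w • (1 : Y →L[ℂ] Y) - A) χ = Φ w • χ - A χ := by
        simp
      rw [h5, map_sub, map_smul, hcompat]
      rw [ContinuousLinearMap.sub_apply, ContinuousLinearMap.smul_apply, dualOp_apply,
        heig w hw, map_smul, sub_self]
    have h6 := congrArg (fun ψ : X →L[ℂ] ℂ => ψ (f w)) h2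
    rw [h4] at h6
    exact hgw h6.symm
  have hclosed : IsClosed (spectrum ℂ A) := spectrum.isClosed A
  have hsub2 : Φ '' G ⊆ closure (spectrum ℂ A) := by
    rintro _ ⟨w, hw, rfl⟩
    have hGan : AnalyticAt ℂ g w := hgdiff.analyticAt (hG.mem_nhds hw)
    rcases hGan.eventually_eq_zero_or_eventually_ne_zero with h0 | h1
    · exact absurd ((hgdiff.analyticOnNhd hG).eqOn_zero_of_preconnected_of_eventuallyEq_zero
        hGconn.isPreconnected hw h0) hgne
    · have hGev : ∀ᶠ z in 𝓝[≠] w, z ∈ G :=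
        eventually_nhdsWithin_of_eventually_nhds (hG.eventually_mem hw)
      have hev : ∀ᶠ z in 𝓝[≠] w, Φ z ∈ spectrum ℂ A := by
        filter_upwards [h1, hGev] with z hz1 hz2 using hkey z hz2 hz1
      have hts : Filter.Tendsto Φ (𝓝[≠] w) (𝓝 (Φ w)) :=
        ((hΦ.continuousOn.continuousAt (hG.mem_nhds hw)).tendsto).mono_left
          nhdsWithin_le_nhds
      exact mem_closure_of_tendsto hts hev
  intro z hz
  have h4 := closure_mono hsub2 (hspec hz)
  rwa [closure_closure, hclosed.closure_eq] at h4

/-- under the eigenvector-family hypotheses, if `M ≠ ⊥` is a closed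
subspace of `X′` invariant under the adjoint `S′`, then
`σ(S) ⊆ σ(S′|_M) ⊆ η(σ(S))`. -/
theorem stmt_9 (X : Type*) [NormedAddCommGroup X] [NormedSpace ℂ X] [CompleteSpace X]
    (S : X →L[ℂ] X)
    (G : Set ℂ) (hG : IsOpen G) (hGne : G.Nonempty) (hGconn : IsConnected G)
    (Φ : ℂ → ℂ) (hΦ : DifferentiableOn ℂ Φ G) (hΦnc : ∃ a ∈ G, ∃ b ∈ G, Φ a ≠ Φ b)
    (f : ℂ → X) (hf : DifferentiableOn ℂ f G)
    (hfne : ∀ w ∈ G, f w ≠ 0) (heig : ∀ w ∈ G, S (f w) = Φ w • f w)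
    (hdense : Dense (Submodule.span ℂ (f '' G) : Set X))
    (hspec : spectrum ℂ S ⊆ closure (Φ '' G))
    (M : Submodule ℂ (X →L[ℂ] ℂ)) (hMclosed : IsClosed (M : Set (X →L[ℂ] ℂ)))
    (hMne : M ≠ ⊥) (hMinv : ∀ φ ∈ M, dualOp S φ ∈ M) :
    spectrum ℂ S ⊆ spectrum ℂ (restrictOp (dualOp S) M hMinv) ∧
    spectrum ℂ (restrictOp (dualOp S) M hMinv) ⊆ fullSpectrum (spectrum ℂ S) := by
  haveI : CompleteSpace M := hMclosed.completeSpace_coe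
  constructor
  · -- σ(S) ⊆ σ(S′|_M)
    obtain ⟨ψ0, hψ0M, hψ00⟩ := (Submodule.ne_bot_iff M).mp hMne
    refine part1_abstract S G hG hGconn Φ hΦ f hf heig hdense hspec
      (restrictOp (dualOp S) M hMinv) M.subtypeL (fun y => rfl)
      (fun a b h => Subtype.ext h) ⟨⟨ψ0, hψ0M⟩, ?_⟩
    intro h
    exact hψ00 (congrArg Subtype.val h)
  · -- σ(S′|_M) ⊆ η(σ(S))
    intro z hz
    by_contra hzf
    rw [fullSpectrum, Set.mem_union] at hzf
    push_neg at hzf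
    obtain ⟨h1, h2⟩ := hzf
    have hub : ¬ Bornology.IsBounded (connectedComponentIn (spectrum ℂ S)ᶜ z) :=
      fun hb => h2 ⟨h1, hb⟩
    exact resolvent_restrict_lemma (dualOp S) M hMclosed hMinv
      (spectrum.isClosed S).isOpen_compl (spectrum_dualOp_subset S) h1 hub hz
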